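/- Let ψ : ℝ × ℝ³ → ℂ³ be a C³ vector field each of whose components satisfies the wave equation ∂_t²ψ(t,x) = Δψ(t,x), where Δ = ∂₁² + ∂₂² + ∂₃² acts componentwise in the spatial variables. Define F : ℝ × ℝ³ → ℂ³ by F = curl(curl ψ) − i·∂_t(curl ψ), with curl acting in the spatial variables. Then F satisfies, pointwise on ℝ × ℝ³, the anti-self-dual (complex) form of the source-free Maxwell equations: ∂_tF = i·curl F and div F = 0. (This is the Hertz-potential mechanism in the spin-1 case: a vector Hertz potential solving the wave equation generates a solution of the Maxwell equations.) -/

import Mathlib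

open MeasureTheory Real Filter

noncomputable section

abbrev E3 : Type := EuclideanSpace ℝ (Fin 3)
abbrev EC3 : Type := EuclideanSpace ℂ (Fin 3)

/-- Spatial partial derivative `∂ᵢh` of a complex-valued function on `ℝ³`. -/
def pd (i : Fin 3) (h : E3 → ℂ) (x : E3) : ℂ := fderiv ℝ h x (EuclideanSpace.single i (1 : ℝ))

/-- The curl of a complex vector field on `ℝ³`:
`curl V = (∂₂V₃ − ∂₃V₂, ∂₃V₁ − ∂₁V₃, ∂₁V₂ − ∂₂V₁)` (with 0-based indices). -/
def curlV (V : E3 → EC3) (x : E3) : EC3 :=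
  (WithLp.equiv 2 (Fin 3 → ℂ)).symm
    ![pd 1 (fun y => V y 2) x - pd 2 (fun y => V y 1) x,
      pd 2 (fun y => V y 0) x - pd 0 (fun y => V y 2) x,
      pd 0 (fun y => V y 1) x - pd 1 (fun y => V y 0) x]

/-- The divergence of a complex vector field on `ℝ³`. -/
def divV (V : E3 → EC3) (x : E3) : ℂ := ∑ i : Fin 3, pd i (fun y => V y i) x

/-- The spatial curl of a time-dependent complex vector field. -/
def curlT (V : ℝ × E3 → EC3) (p : ℝ × E3) : EC3 := curlV (fun y => V (p.1, y)) p.2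

/-- The spatial divergence of a time-dependent complex vector field. -/
def divT (V : ℝ × E3 → EC3) (p : ℝ × E3) : ℂ := divV (fun y => V (p.1, y)) p.2

/-- The time derivative `∂ₜV` of a time-dependent complex vector field. -/
def dtV (V : ℝ × E3 → EC3) (p : ℝ × E3) : EC3 := deriv (fun s => V (s, p.2)) p.1

/-- The field `F = curl (curl ψ) − i ∂ₜ (curl ψ)` generated by a Hertz potential `ψ`. -/
def hertzF (ψ : ℝ × E3 → EC3) (p : ℝ × E3) : EC3 :=
  curlT (curlT ψ) p - Complex.I • dtV (curlT ψ) p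

namespace H18

abbrev P : Type := ℝ × E3
def e0 : P := (1, 0)
def ei (i : Fin 3) : P := (0, EuclideanSpace.single i (1:ℝ))

variable {F G : Type*} [NormedAddCommGroup F] [NormedSpace ℝ F]
  [NormedAddCommGroup G] [NormedSpace ℝ G]

/-- Directional derivative on `ℝ × ℝ³`. -/
def Dv (v : P) (f : P → F) (p : P) : F := fderiv ℝ f p v

lemma Dv_contDiff {f : P → F} {m n : WithTop ℕ∞} (hf : ContDiff ℝ n f) (h : m + 1 ≤ n) (v : P) :
    ContDiff ℝ m (Dv v f) :=
  (ContinuousLinearMap.apply ℝ F v).contDiff.comp (hf.fderiv_right h)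

lemma hasDerivAt_timeSlice {f : P → F} {t : ℝ} {x : E3} (hf : DifferentiableAt ℝ f (t, x)) :
    HasDerivAt (fun s => f (s, x)) (Dv e0 f (t, x)) t := by
  have h1 : HasDerivAt (fun s : ℝ => ((s, x) : P)) ((1:ℝ), (0:E3)) t :=
    (hasDerivAt_id t).prodMk (hasDerivAt_const t x)
  have h2 := hf.hasFDerivAt.comp_hasDerivAt t h1
  simpa [Dv, e0, Function.comp_def] using h2

lemma deriv_timeSlice {f : P → F} {t : ℝ} {x : E3} (hf : DifferentiableAt ℝ f (t, x)) :
    deriv (fun s => f (s, x)) t = Dv e0 f (t, x) := (hasDerivAt_timeSlice hf).deriv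

lemma hasDerivAt_lineSlice {f : P → F} {t s : ℝ} {x v : E3}
    (hf : DifferentiableAt ℝ f (t, x + s • v)) :
    HasDerivAt (fun s' => f (t, x + s' • v)) (Dv (0, v) f (t, x + s • v)) s := by
  have h1 : HasDerivAt (fun s' : ℝ => ((t, x + s' • v) : P)) (((0:ℝ), v) : P) s := by
    refine (hasDerivAt_const s t).prodMk ?_
    simpa using ((hasDerivAt_id s).smul_const v).const_add x
  have h2 := hf.hasFDerivAt.comp_hasDerivAt s h1
  simpa [Dv, Function.comp_def] using h2

lemma pd_slice {f : P → ℂ} {t : ℝ} {x : E3} (hf : DifferentiableAt ℝ f (t, x)) (i : Fin 3) :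
    pd i (fun y => f (t, y)) x = Dv (ei i) f (t, x) := by
  have h1 : HasFDerivAt (fun y : E3 => ((t, y) : P))
      ((0 : E3 →L[ℝ] ℝ).prod (ContinuousLinearMap.id ℝ E3)) x :=
    (hasFDerivAt_const t x).prodMk (hasFDerivAt_id x)
  have h2 := (hf.hasFDerivAt.comp x h1).fderiv
  simp only [pd]
  rw [show (fun y => f (t, y)) = f ∘ (fun y : E3 => ((t, y) : P)) from rfl, h2]
  simp [Dv, ei]

lemma Dv_clm (L : F →L[ℝ] G) {f : P → F} {p : P} (hf : DifferentiableAt ℝ f p) (v : P) :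
    Dv v (fun q => L (f q)) p = L (Dv v f p) := by
  have h2 := (L.hasFDerivAt.comp p hf.hasFDerivAt).fderiv
  simp only [Dv]
  rw [show (fun q => L (f q)) = L ∘ f from rfl, h2]
  rfl

lemma Dv_Dv {f : P → F} (hf : ContDiff ℝ 2 f) (u v : P) (p : P) :
    Dv u (Dv v f) p = fderiv ℝ (fderiv ℝ f) p u v := by
  have hdf : DifferentiableAt ℝ (fderiv ℝ f) p :=
    ((hf.fderiv_right (m := 1) (by norm_num)).differentiable one_ne_zero) p
  have h1 : Dv v f = fun q => (ContinuousLinearMap.apply ℝ F v) (fderiv ℝ f q) := rfl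
  rw [h1, Dv_clm _ hdf u]
  rfl

lemma Dv_comm {f : P → F} (hf : ContDiff ℝ 2 f) (u v : P) :
    Dv u (Dv v f) = Dv v (Dv u f) := by
  funext p
  rw [Dv_Dv hf, Dv_Dv hf]
  exact hf.contDiffAt.isSymmSndFDerivAt (by simp) u v

lemma Dv_sub {f g : P → ℂ} (hf : Differentiable ℝ f) (hg : Differentiable ℝ g) (v : P) :
    Dv v (fun q => f q - g q) = fun p => Dv v f p - Dv v g p := by
  funext p; simp [Dv, fderiv_fun_sub (hf p) (hg p)]

lemma Dv_add3 {a b c : P → ℂ} (ha : Differentiable ℝ a) (hb : Differentiable ℝ b)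
    (hc : Differentiable ℝ c) (v : P) :
    Dv v (fun q => a q + b q + c q) = fun p => Dv v a p + Dv v b p + Dv v c p := by
  funext p
  simp only [Dv]
  rw [fderiv_fun_add ((ha p).fun_add (hb p)) (hc p), fderiv_fun_add (ha p) (hb p)]
  rfl

lemma Dv_Fcomb {a b e : P → ℂ} (ha : Differentiable ℝ a) (hb : Differentiable ℝ b)
    (he : Differentiable ℝ e) (c : ℂ) (v : P) :
    Dv v (fun q => a q - b q - c * e q) =
      fun p => Dv v a p - Dv v b p - c * Dv v e p := by
  funext p
  simp only [Dv]
  rw [fderiv_fun_sub ((ha p).fun_sub (hb p)) ((he p).const_mul c), fderiv_fun_sub (ha p) (hb p),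
    fderiv_const_mul (he p) c]
  simp

lemma Dv_zero (v : P) : Dv v (fun _ : P => (0:ℂ)) = fun _ => (0:ℂ) := by
  funext p; simp [Dv]

def pr (k : Fin 3) : EC3 →L[ℝ] ℂ := (EuclideanSpace.proj k).restrictScalars ℝ

lemma Dv_apply_comm {f : P → EC3} {p : P} (hf : DifferentiableAt ℝ f p) (v : P) (k : Fin 3) :
    Dv v (fun q => f q k) p = (Dv v f p) k :=
  Dv_clm (pr k) hf v

def vf (f : Fin 3 → P → ℂ) : P → EC3 :=
  fun p => (WithLp.equiv 2 (Fin 3 → ℂ)).symm (fun k => f k p)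

def LL : (Fin 3 → ℂ) →L[ℝ] EC3 :=
  ((PiLp.continuousLinearEquiv 2 ℂ
    (fun _ : Fin 3 => ℂ)).symm.toContinuousLinearMap).restrictScalars ℝ

lemma vf_contDiff {f : Fin 3 → P → ℂ} {n : WithTop ℕ∞} (hf : ∀ k, ContDiff ℝ n (f k)) :
    ContDiff ℝ n (vf f) := by
  have h : vf f = fun p => LL (fun k => f k p) := rfl
  rw [h]
  exact LL.contDiff.comp (contDiff_pi.mpr hf)

def curlc (f : Fin 3 → P → ℂ) (k : Fin 3) (p : P) : ℂ :=
  Dv (ei (k+1)) (f (k+2)) p - Dv (ei (k+2)) (f (k+1)) p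

lemma curlT_vf {f : Fin 3 → P → ℂ} (hf : ∀ k, Differentiable ℝ (f k)) (p : P) :
    curlT (vf f) p = vf (curlc f) p := by
  have h : ∀ i j : Fin 3, pd i (fun y => vf f (p.1, y) j) p.2 = Dv (ei i) (f j) p := by
    intro i j
    have e1 : (fun y => vf f (p.1, y) j) = fun y => f j (p.1, y) := rfl
    rw [e1, pd_slice (hf j (p.1, p.2)) i]
  unfold curlT curlV
  rw [h 1 2, h 2 1, h 2 0, h 0 2, h 0 1, h 1 0]
  unfold vf
  congr 1
  funext k
  fin_cases k <;> simp [curlc]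

lemma dtV_vf {f : Fin 3 → P → ℂ} (hf : ∀ k, ContDiff ℝ 1 (f k)) (p : P) :
    dtV (vf f) p = vf (fun k => Dv e0 (f k)) p := by
  have hdiff : Differentiable ℝ (vf f) := (vf_contDiff hf).differentiable one_ne_zero
  have h1 : dtV (vf f) p = Dv e0 (vf f) p := by
    unfold dtV
    rw [deriv_timeSlice (hdiff (p.1, p.2))]
  rw [h1]
  exact PiLp.ext fun k => (Dv_apply_comm (hdiff p) e0 k).symm

lemma divT_vf {f : Fin 3 → P → ℂ} (hf : ∀ k, Differentiable ℝ (f k)) (p : P) :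
    divT (vf f) p = ∑ i : Fin 3, Dv (ei i) (f i) p := by
  unfold divT divV
  refine Finset.sum_congr rfl fun i _ => ?_
  have e1 : (fun y => vf f (p.1, y) i) = fun y => f i (p.1, y) := rfl
  rw [e1, pd_slice (hf i (p.1, p.2)) i]

def gcomp (ψ : P → EC3) (k : Fin 3) (q : P) : ℂ := ψ q k

section Wave
variable {ψ : P → EC3}

lemma waveEC (hψ : ContDiff ℝ 3 ψ) (hwave : ∀ (t : ℝ) (x : E3),
      iteratedDeriv 2 (fun s : ℝ => ψ (s, x)) t =
        ∑ i : Fin 3,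
          iteratedDeriv 2 (fun s : ℝ => ψ (t, x + s • EuclideanSpace.single i (1 : ℝ))) 0)
    (p : P) :
    Dv e0 (Dv e0 ψ) p = ∑ i : Fin 3, Dv (ei i) (Dv (ei i) ψ) p := by
  have hψd : Differentiable ℝ ψ := hψ.differentiable (by norm_num)
  have hDvd : ∀ v : P, Differentiable ℝ (Dv v ψ) :=
    fun v => (Dv_contDiff hψ (m := 2) (by norm_num) v).differentiable (by norm_num)
  have h := hwave p.1 p.2
  simp only [iteratedDeriv_succ, iteratedDeriv_zero] at h
  have e1 : deriv (fun s => ψ (s, p.2)) = fun s => Dv e0 ψ (s, p.2) :=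
    funext fun s => deriv_timeSlice (hψd _)
  rw [e1, deriv_timeSlice (hDvd e0 (p.1, p.2))] at h
  have e2 : ∀ i : Fin 3,
      deriv (fun s => ψ (p.1, p.2 + s • EuclideanSpace.single i (1:ℝ))) =
      fun s => Dv (ei i) ψ (p.1, p.2 + s • EuclideanSpace.single i (1:ℝ)) :=
    fun i => funext fun s => (hasDerivAt_lineSlice (hψd _)).deriv
  simp only [e2] at h
  have e3 : ∀ i : Fin 3,
      deriv (fun s : ℝ => Dv (ei i) ψ (p.1, p.2 + s • EuclideanSpace.single i (1:ℝ))) 0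
        = Dv (ei i) (Dv (ei i) ψ) p := by
    intro i
    have h4 := (hasDerivAt_lineSlice (f := Dv (ei i) ψ) (t := p.1) (x := p.2)
        (v := EuclideanSpace.single i (1:ℝ)) (s := 0) (hDvd (ei i) _)).deriv
    simpa [ei] using h4
  simp only [e3] at h
  simpa using h

lemma waveg (hψ : ContDiff ℝ 3 ψ) (hwave : ∀ (t : ℝ) (x : E3),
      iteratedDeriv 2 (fun s : ℝ => ψ (s, x)) t =
        ∑ i : Fin 3,
          iteratedDeriv 2 (fun s : ℝ => ψ (t, x + s • EuclideanSpace.single i (1 : ℝ))) 0)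
    (k : Fin 3) :
    Dv e0 (Dv e0 (gcomp ψ k)) =
      fun p => ∑ i : Fin 3, Dv (ei i) (Dv (ei i) (gcomp ψ k)) p := by
  have hψd : Differentiable ℝ ψ := hψ.differentiable (by norm_num)
  have hDvd : ∀ v : P, Differentiable ℝ (Dv v ψ) :=
    fun v => (Dv_contDiff hψ (m := 2) (by norm_num) v).differentiable (by norm_num)
  funext p
  have h1 : ∀ v : P, Dv v (gcomp ψ k) = fun q => (Dv v ψ q) k :=
    fun v => funext fun q => Dv_apply_comm (hψd q) v k
  have h2 : ∀ v : P, Dv v (Dv v (gcomp ψ k)) p = (Dv v (Dv v ψ) p) k := by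
    intro v
    rw [h1 v]
    exact Dv_apply_comm (hDvd v p) v k
  rw [h2 e0]
  rw [waveEC hψ hwave p]
  simp only [Fin.sum_univ_three]
  rw [h2 (ei 0), h2 (ei 1), h2 (ei 2)]
  rfl

lemma wave_of {h : P → ℂ} (hh : ContDiff ℝ 3 h)
    (hw : Dv e0 (Dv e0 h) = fun p => ∑ i : Fin 3, Dv (ei i) (Dv (ei i) h) p) (u : P) :
    Dv e0 (Dv e0 (Dv u h)) = fun p => ∑ i : Fin 3, Dv (ei i) (Dv (ei i) (Dv u h)) p := by
  have hC2 : ContDiff ℝ 2 h := hh.of_le (by norm_num)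
  have hD2 : ∀ v : P, ContDiff ℝ 2 (Dv v h) := fun v => Dv_contDiff hh (by norm_num) v
  have hDDd : ∀ v w : P, Differentiable ℝ (Dv v (Dv w h)) :=
    fun v w => (Dv_contDiff (hD2 w) (m := 1) (by norm_num) v).differentiable one_ne_zero
  have key : ∀ v : P, Dv u (Dv v (Dv v h)) = Dv v (Dv v (Dv u h)) := by
    intro v
    rw [Dv_comm (hD2 v) u v, Dv_comm hC2 u v]
  calc Dv e0 (Dv e0 (Dv u h)) = Dv e0 (Dv u (Dv e0 h)) := by rw [Dv_comm hC2 u e0]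
    _ = Dv u (Dv e0 (Dv e0 h)) := by rw [Dv_comm (hD2 e0) e0 u]
    _ = Dv u (fun p => ∑ i : Fin 3, Dv (ei i) (Dv (ei i) h) p) := by rw [hw]
    _ = fun p => ∑ i : Fin 3, Dv (ei i) (Dv (ei i) (Dv u h)) p := by
        have expand : (fun p => ∑ i : Fin 3, Dv (ei i) (Dv (ei i) h) p) =
            fun p => Dv (ei 0) (Dv (ei 0) h) p + Dv (ei 1) (Dv (ei 1) h) p
              + Dv (ei 2) (Dv (ei 2) h) p := by
          funext p; rw [Fin.sum_univ_three]
        rw [expand, Dv_add3 (hDDd _ _) (hDDd _ _) (hDDd _ _) u]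
        funext p
        rw [Fin.sum_univ_three, key (ei 0), key (ei 1), key (ei 2)]

end Wave

/-- Components of `curl ψ`. -/
def Wc (ψ : P → EC3) : Fin 3 → P → ℂ := curlc (gcomp ψ)

/-- Components of the Hertz field. -/
def Fc (ψ : P → EC3) (k : Fin 3) (p : P) : ℂ :=
  curlc (Wc ψ) k p - Complex.I * Dv e0 (Wc ψ k) p

theorem main (ψ : ℝ × E3 → EC3) (hψ : ContDiff ℝ 3 ψ)
    (hwave : ∀ (t : ℝ) (x : E3),
      iteratedDeriv 2 (fun s : ℝ => ψ (s, x)) t =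
        ∑ i : Fin 3,
          iteratedDeriv 2 (fun s : ℝ => ψ (t, x + s • EuclideanSpace.single i (1 : ℝ))) 0) :
    (∀ p : ℝ × E3, dtV (hertzF ψ) p = Complex.I • curlT (hertzF ψ) p) ∧
      ∀ p : ℝ × E3, divT (hertzF ψ) p = 0 := by
  -- index arithmetic in `Fin 3`
  have i11 : ∀ k : Fin 3, k+1+1 = k+2 := by decide
  have i22 : ∀ k : Fin 3, k+2+2 = k+1 := by decide
  have i12 : ∀ k : Fin 3, k+1+2 = k := by decide
  have i21 : ∀ k : Fin 3, k+2+1 = k := by decide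
  have sum3 : ∀ (f : Fin 3 → ℂ) (k : Fin 3), ∑ i : Fin 3, f i = f k + f (k+1) + f (k+2) := by
    intro f k
    rw [← Equiv.sum_comp (Equiv.addLeft k) f, Fin.sum_univ_three]
    simp [Equiv.addLeft]
  -- smoothness bookkeeping
  have hgc : ∀ k, ContDiff ℝ 3 (gcomp ψ k) := fun k => (pr k).contDiff.comp hψ
  have hgC2 : ∀ k, ContDiff ℝ 2 (gcomp ψ k) := fun k => (hgc k).of_le (by norm_num)
  have hgd : ∀ k, Differentiable ℝ (gcomp ψ k) := fun k => (hgC2 k).differentiable two_ne_zero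
  have hgA : ∀ (v : P) (k : Fin 3), ContDiff ℝ 2 (Dv v (gcomp ψ k)) :=
    fun v k => Dv_contDiff (hgc k) (by norm_num) v
  have hgAd : ∀ (v : P) (k : Fin 3), Differentiable ℝ (Dv v (gcomp ψ k)) :=
    fun v k => (hgA v k).differentiable two_ne_zero
  have hgAAd : ∀ (u v : P) (k : Fin 3), Differentiable ℝ (Dv u (Dv v (gcomp ψ k))) :=
    fun u v k => (Dv_contDiff (hgA v k) (m := 1) (by norm_num) u).differentiable one_ne_zero
  have hWC2 : ∀ k, ContDiff ℝ 2 (Wc ψ k) := by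
    intro k
    exact (Dv_contDiff (hgc _) (by norm_num) _).sub (Dv_contDiff (hgc _) (by norm_num) _)
  have hWd : ∀ k, Differentiable ℝ (Wc ψ k) := fun k => (hWC2 k).differentiable two_ne_zero
  have hdWC1 : ∀ (v : P) (k : Fin 3), ContDiff ℝ 1 (Dv v (Wc ψ k)) :=
    fun v k => Dv_contDiff (hWC2 k) (by norm_num) v
  have hdWd : ∀ (v : P) (k : Fin 3), Differentiable ℝ (Dv v (Wc ψ k)) :=
    fun v k => (hdWC1 v k).differentiable one_ne_zero
  have hFC1 : ∀ k, ContDiff ℝ 1 (Fc ψ k) := by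
    intro k
    show ContDiff ℝ 1 (fun p => Dv (ei (k+1)) (Wc ψ (k+2)) p - Dv (ei (k+2)) (Wc ψ (k+1)) p
      - Complex.I * Dv e0 (Wc ψ k) p)
    exact ((hdWC1 _ _).sub (hdWC1 _ _)).sub (contDiff_const.mul (hdWC1 _ _))
  have hFd : ∀ k, Differentiable ℝ (Fc ψ k) := fun k => (hFC1 k).differentiable one_ne_zero
  -- identification of the fields with componentwise descriptions
  have hψvf : ψ = vf (gcomp ψ) := rfl
  have hcurlψ : curlT ψ = vf (Wc ψ) := by
    funext p
    conv_lhs => rw [hψvf]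
    exact curlT_vf hgd p
  have hhertz : hertzF ψ = vf (Fc ψ) := by
    funext p
    unfold hertzF
    rw [hcurlψ, curlT_vf hWd p, dtV_vf (fun k => (hWC2 k).of_le one_le_two) p]
    rfl
  -- expansion of derivatives of W and F
  have hdW : ∀ (v : P) (k : Fin 3), Dv v (Wc ψ k) = fun p =>
      Dv v (Dv (ei (k+1)) (gcomp ψ (k+2))) p - Dv v (Dv (ei (k+2)) (gcomp ψ (k+1))) p :=
    fun v k => Dv_sub (hgAd _ _) (hgAd _ _) v
  have hdF : ∀ (v : P) (k : Fin 3), Dv v (Fc ψ k) = fun p =>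
      Dv v (Dv (ei (k+1)) (Wc ψ (k+2))) p - Dv v (Dv (ei (k+2)) (Wc ψ (k+1))) p
        - Complex.I * Dv v (Dv e0 (Wc ψ k)) p :=
    fun v k => Dv_Fcomb (hdWd _ _) (hdWd _ _) (hdWd _ _) Complex.I v
  -- div curl ψ = 0
  have hdiv0 : ∀ k : Fin 3, (fun p => Dv (ei k) (Wc ψ k) p + Dv (ei (k+1)) (Wc ψ (k+1)) p
      + Dv (ei (k+2)) (Wc ψ (k+2)) p) = fun _ => (0:ℂ) := by
    intro k
    funext p
    rw [hdW (ei k) k, hdW (ei (k+1)) (k+1), hdW (ei (k+2)) (k+2)]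
    simp only [i11, i22, i12, i21]
    have c1 := congrFun (Dv_comm (hgC2 (k+2)) (ei k) (ei (k+1))) p
    have c2 := congrFun (Dv_comm (hgC2 (k+1)) (ei k) (ei (k+2))) p
    have c3 := congrFun (Dv_comm (hgC2 k) (ei (k+1)) (ei (k+2))) p
    linear_combination c1 - c2 + c3
  -- wave equation for the components of W
  have hwg := waveg hψ hwave
  have waveW : ∀ (k : Fin 3) (p : P), Dv e0 (Dv e0 (Wc ψ k)) p =
      Dv (ei k) (Dv (ei k) (Wc ψ k)) p + Dv (ei (k+1)) (Dv (ei (k+1)) (Wc ψ k)) p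
        + Dv (ei (k+2)) (Dv (ei (k+2)) (Wc ψ k)) p := by
    intro k p
    have expand2 : ∀ v : P, Dv v (Dv v (Wc ψ k)) p =
        Dv v (Dv v (Dv (ei (k+1)) (gcomp ψ (k+2)))) p
          - Dv v (Dv v (Dv (ei (k+2)) (gcomp ψ (k+1)))) p := by
      intro v
      rw [hdW v k]
      exact congrFun (Dv_sub (hgAAd _ _ _) (hgAAd _ _ _) v) p
    have hA := wave_of (hgc (k+2)) (hwg (k+2)) (ei (k+1))
    have hB := wave_of (hgc (k+1)) (hwg (k+1)) (ei (k+2))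
    have eA := (congrFun hA p).trans
      (sum3 (fun i => Dv (ei i) (Dv (ei i) (Dv (ei (k+1)) (gcomp ψ (k+2)))) p) k)
    have eB := (congrFun hB p).trans
      (sum3 (fun i => Dv (ei i) (Dv (ei i) (Dv (ei (k+2)) (gcomp ψ (k+1)))) p) k)
    have et := expand2 e0
    have e1 := expand2 (ei k)
    have e2 := expand2 (ei (k+1))
    have e3 := expand2 (ei (k+2))
    linear_combination et + eA - eB - e1 - e2 - e3
  -- the two Maxwell equations, componentwise
  have key1 : ∀ (k : Fin 3) (p : P), Dv e0 (Fc ψ k) p =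
      Complex.I * (Dv (ei (k+1)) (Fc ψ (k+2)) p - Dv (ei (k+2)) (Fc ψ (k+1)) p) := by
    intro k p
    have L := congrFun (hdF e0 k) p
    have R2 := congrFun (hdF (ei (k+1)) (k+2)) p
    simp only [i21, i22] at R2
    have R1 := congrFun (hdF (ei (k+2)) (k+1)) p
    simp only [i11, i12] at R1
    have c1 := congrFun (Dv_comm (hWC2 (k+2)) e0 (ei (k+1))) p
    have c2 := congrFun (Dv_comm (hWC2 (k+1)) e0 (ei (k+2))) p
    have c3 := congrFun (Dv_comm (hWC2 (k+1)) (ei (k+1)) (ei k)) p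
    have c4 := congrFun (Dv_comm (hWC2 (k+2)) (ei (k+2)) (ei k)) p
    have hw := waveW k p
    have h5 : Dv (ei k) (Dv (ei k) (Wc ψ k)) p + Dv (ei k) (Dv (ei (k+1)) (Wc ψ (k+1))) p
        + Dv (ei k) (Dv (ei (k+2)) (Wc ψ (k+2))) p = 0 := by
      have h6 := congrFun (congrArg (Dv (ei k)) (hdiv0 k)) p
      rw [congrFun (Dv_add3 (hdWd _ _) (hdWd _ _) (hdWd _ _) (ei k)) p,
        congrFun (Dv_zero (ei k)) p] at h6
      exact h6
    linear_combination L - Complex.I * R2 + Complex.I * R1 + c1 - c2 - Complex.I * hw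
      - Complex.I * h5 - Complex.I * c3 - Complex.I * c4
      + (Dv (ei (k+1)) (Dv e0 (Wc ψ (k+2))) p - Dv (ei (k+2)) (Dv e0 (Wc ψ (k+1))) p)
        * Complex.I_sq
  have key2 : ∀ p : P, ∑ i : Fin 3, Dv (ei i) (Fc ψ i) p = 0 := by
    intro p
    rw [Fin.sum_univ_three]
    have j01 : (0:Fin 3)+1 = 1 := by decide
    have j02 : (0:Fin 3)+2 = 2 := by decide
    have j11 : (1:Fin 3)+1 = 2 := by decide
    have j12 : (1:Fin 3)+2 = 0 := by decide
    have j21 : (2:Fin 3)+1 = 0 := by decide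
    have j22 : (2:Fin 3)+2 = 1 := by decide
    have E0 := congrFun (hdF (ei 0) 0) p
    simp only [j01, j02] at E0
    have E1 := congrFun (hdF (ei 1) 1) p
    simp only [j11, j12] at E1
    have E2 := congrFun (hdF (ei 2) 2) p
    simp only [j21, j22] at E2
    have m1 := congrFun (Dv_comm (hWC2 2) (ei 0) (ei 1)) p
    have m2 := congrFun (Dv_comm (hWC2 1) (ei 0) (ei 2)) p
    have m3 := congrFun (Dv_comm (hWC2 0) (ei 1) (ei 2)) p
    have t0 := congrFun (Dv_comm (hWC2 0) (ei 0) e0) p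
    have t1 := congrFun (Dv_comm (hWC2 1) (ei 1) e0) p
    have t2 := congrFun (Dv_comm (hWC2 2) (ei 2) e0) p
    have hdt0 : Dv e0 (Dv (ei 0) (Wc ψ 0)) p + Dv e0 (Dv (ei 1) (Wc ψ 1)) p
        + Dv e0 (Dv (ei 2) (Wc ψ 2)) p = 0 := by
      have h7 := congrFun (congrArg (Dv e0) (hdiv0 0)) p
      simp only [j01, j02] at h7
      rw [congrFun (Dv_add3 (hdWd _ _) (hdWd _ _) (hdWd _ _) e0) p,
        congrFun (Dv_zero e0) p] at h7
      exact h7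
    linear_combination E0 + E1 + E2 + m1 - m2 + m3 - Complex.I * t0 - Complex.I * t1
      - Complex.I * t2 - Complex.I * hdt0
  constructor
  · intro p
    rw [hhertz, dtV_vf hFC1 p, curlT_vf hFd p]
    refine PiLp.ext fun k => ?_
    show Dv e0 (Fc ψ k) p = Complex.I * curlc (Fc ψ) k p
    exact key1 k p
  · intro p
    rw [hhertz, divT_vf hFd p]
    exact key2 p

end H18

theorem stmt18 (ψ : ℝ × E3 → EC3) (hψ : ContDiff ℝ 3 ψ)
    (hwave : ∀ (t : ℝ) (x : E3),
      iteratedDeriv 2 (fun s : ℝ => ψ (s, x)) t =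
        ∑ i : Fin 3,
          iteratedDeriv 2 (fun s : ℝ => ψ (t, x + s • EuclideanSpace.single i (1 : ℝ))) 0) :
    (∀ p : ℝ × E3, dtV (hertzF ψ) p = Complex.I • curlT (hertzF ψ) p) ∧
      ∀ p : ℝ × E3, divT (hertzF ψ) p = 0 :=
  H18.main ψ hψ hwave
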